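/- (Generalization gap of projection) Let f* ∈ L²(X, μ) and suppose f* is G-invariant, Y = f*(X) + ξ with ξ zero-mean, finite variance, independent of X ∼ μ. For f ∈ L²(X, μ), write f = f̄ + f^⊥ where f̄ is the orthogonal projection of f onto the closed subspace of G-invariant functions. Then the risk gap satisfies R(f) − R(f̄) = ‖f^⊥‖²_μ ≥ 0, where R(h) = E[(Y − h(X))²]. -/

import Mathlib

open MeasureTheory ProbabilityTheory

/-- Generalization gap of projecting onto invariants: if the target `f*` is
`G`-invariant, `Y = f*(X) + ξ` with `ξ` zero-mean, finite-variance noise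
independent of `X ∼ μ`, and `f̄` is the orthogonal projection of `f` onto the
invariant functions (characterized as: `f̄` is invariant and `f − f̄` is
orthogonal to all invariant `L²` functions), then
`R(f) − R(f̄) = ‖f − f̄‖²_μ ≥ 0`. -/
theorem generalization_gap_of_projection
    {G : Type*} [Group G] [TopologicalSpace G] [IsTopologicalGroup G]
    [CompactSpace G] [MeasurableSpace G] [BorelSpace G]
    {Z : Type*} [MeasurableSpace Z]
    (μ : Measure Z) [IsProbabilityMeasure μ]
    (a : G → Z → Z)
    (haction_one : ∀ x, a 1 x = x)
    (haction_mul : ∀ g g' x, a (g * g') x = a g (a g' x))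
    (hpres : ∀ g, MeasurePreserving (a g) μ μ)
    {Ω : Type*} [MeasurableSpace Ω] (P : Measure Ω) [IsProbabilityMeasure P]
    (X : Ω → Z) (hX : Measurable X) (hXlaw : Measure.map X P = μ)
    (ξ : Ω → ℝ) (hξmeas : Measurable ξ) (hξL2 : MemLp ξ 2 P)
    (hξmean : ∫ ω, ξ ω ∂P = 0)
    (hindep : IndepFun ξ X P)
    (fstar : Z → ℝ) (hfstarL2 : MemLp fstar 2 μ)
    (hfstarinv : ∀ g x, fstar (a g x) = fstar x)
    (Y : Ω → ℝ) (hY : ∀ ω, Y ω = fstar (X ω) + ξ ω)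
    (f fbar : Z → ℝ) (hfL2 : MemLp f 2 μ) (hfbarL2 : MemLp fbar 2 μ)
    (hfbarinv : ∀ g x, fbar (a g x) = fbar x)
    (hperp : ∀ h : Z → ℝ, MemLp h 2 μ → (∀ g x, h (a g x) = h x) →
      ∫ x, (f x - fbar x) * h x ∂μ = 0)
    (R : (Z → ℝ) → ℝ)
    (hR : ∀ h : Z → ℝ, R h = ∫ ω, (Y ω - h (X ω)) ^ 2 ∂P) :
    R f - R fbar = ∫ x, (f x - fbar x) ^ 2 ∂μ ∧
    0 ≤ R f - R fbar := by
  have hXpm : MeasurePreserving X P μ := ⟨hX, hXlaw⟩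
  -- Key: for any L² function h, R h = ∫ (fstar - h)² dμ + ∫ ξ² dP.
  have key : ∀ h : Z → ℝ, MemLp h 2 μ →
      R h = (∫ z, (fstar z - h z) ^ 2 ∂μ) + ∫ ω, ξ ω ^ 2 ∂P := by
    intro h hh
    rw [hR]
    set u : Z → ℝ := fun z => fstar z - h z with hu
    have huL2 : MemLp u 2 μ := hfstarL2.sub hh
    have huXL2 : MemLp (fun ω => u (X ω)) 2 P := huL2.comp_measurePreserving hXpm
    -- a measurable modification of u
    obtain ⟨u', hu'meas, hu'ae⟩ :
        ∃ u' : Z → ℝ, Measurable u' ∧ u =ᵐ[μ] u' :=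
      ⟨huL2.aestronglyMeasurable.mk u,
        huL2.aestronglyMeasurable.measurable_mk.mono (le_refl _) le_rfl |>.mono le_rfl le_rfl,
        huL2.aestronglyMeasurable.ae_eq_mk⟩
    have hcompae : (fun ω => u (X ω)) =ᵐ[P] fun ω => u' (X ω) := by
      have := MeasureTheory.ae_of_ae_map hX.aemeasurable (hXlaw ▸ hu'ae)
      exact this
    have hindep' : IndepFun (fun ω => u (X ω)) ξ P := by
      have h1 : IndepFun (fun ω => u' (X ω)) ξ P :=
        (hindep.comp measurable_id hu'meas).symm
      exact h1.congr hcompae.symm (Filter.EventuallyEq.refl _ _)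
    have hsqint : Integrable (fun ω => u (X ω) ^ 2) P := huXL2.integrable_sq
    have hξsqint : Integrable (fun ω => ξ ω ^ 2) P := hξL2.integrable_sq
    have hcrossint : Integrable (fun ω => u (X ω) * ξ ω) P :=
      hindep'.integrable_mul (huXL2.integrable one_le_two) (hξL2.integrable one_le_two)
    have hpt : (fun ω => (Y ω - h (X ω)) ^ 2)
        = fun ω => u (X ω) ^ 2 + 2 * (u (X ω) * ξ ω) + ξ ω ^ 2 := by
      funext ω; rw [hY]; simp only [hu]; ring
    rw [hpt]
    have h12 : Integrable (fun ω => u (X ω) ^ 2 + 2 * (u (X ω) * ξ ω)) P :=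
      hsqint.add (hcrossint.const_mul 2)
    rw [integral_add h12 hξsqint, integral_add hsqint (hcrossint.const_mul 2),
      integral_const_mul]
    have hcross : ∫ ω, u (X ω) * ξ ω ∂P = 0 := by
      rw [hindep'.integral_fun_mul_eq_mul_integral huXL2.aestronglyMeasurable hξL2.aestronglyMeasurable,
        hξmean, mul_zero]
    have hchg : ∫ ω, u (X ω) ^ 2 ∂P = ∫ z, u z ^ 2 ∂μ := by
      rw [← hXlaw, integral_map hX.aemeasurable]
      exact (huL2.aestronglyMeasurable.pow 2).mono_ac (hXlaw ▸ Measure.AbsolutelyContinuous.rfl)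
    rw [hcross, hchg]; ring
  have hRf := key f hfL2
  have hRfbar := key fbar hfbarL2
  -- orthogonality: ∫ (f - fbar)(fstar - fbar) dμ = 0
  have horth : ∫ x, (f x - fbar x) * (fstar x - fbar x) ∂μ = 0 :=
    hperp (fun x => fstar x - fbar x) (hfstarL2.sub hfbarL2)
      (fun g x => show fstar (a g x) - fbar (a g x) = _ by rw [hfstarinv, hfbarinv])
  -- integrability over μ
  have hd : MemLp (fun x => f x - fbar x) 2 μ := hfL2.sub hfbarL2
  have hv : MemLp (fun x => fstar x - fbar x) 2 μ := hfstarL2.sub hfbarL2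
  have hdsq : Integrable (fun x => (f x - fbar x) ^ 2) μ := hd.integrable_sq
  have hvsq : Integrable (fun x => (fstar x - fbar x) ^ 2) μ := hv.integrable_sq
  have hdv : Integrable (fun x => (f x - fbar x) * (fstar x - fbar x)) μ := by
    have : MemLp (fun x => (f x - fbar x) * (fstar x - fbar x)) 1 μ := by
      have := MemLp.smul (𝕜 := ℝ) (p := 2) (q := 2) (r := 1) hv hd (hpqr := ⟨by simp [ENNReal.inv_two_add_inv_two]⟩)
      simpa [Pi.smul_apply, smul_eq_mul, Pi.mul_def] using this
    exact this.integrable le_rfl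
  have hexpand : ∫ z, (fstar z - f z) ^ 2 ∂μ
      = (∫ z, (fstar z - fbar z) ^ 2 ∂μ)
        - 2 * ∫ z, (f z - fbar z) * (fstar z - fbar z) ∂μ
        + ∫ z, (f z - fbar z) ^ 2 ∂μ := by
    have hpt : (fun z => (fstar z - f z) ^ 2)
        = fun z => (fstar z - fbar z) ^ 2
          - 2 * ((f z - fbar z) * (fstar z - fbar z)) + (f z - fbar z) ^ 2 := by
      funext z; ring
    have h12 : Integrable
        (fun z => (fstar z - fbar z) ^ 2 - 2 * ((f z - fbar z) * (fstar z - fbar z))) μ :=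
      hvsq.sub (hdv.const_mul 2)
    rw [hpt, integral_add h12 hdsq, integral_sub hvsq (hdv.const_mul 2), integral_const_mul]
  have hgap : R f - R fbar = ∫ x, (f x - fbar x) ^ 2 ∂μ := by
    rw [hRf, hRfbar, hexpand, horth]; ring
  refine ⟨hgap, ?_⟩
  rw [hgap]
  exact integral_nonneg fun x => sq_nonneg _
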